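/- Let t ↦ A_t be a one-parameter group of matrices in GL(n+1,ℝ) (continuous homomorphism from ℝ), and suppose each induced spherical map a_t(v) = A_t v/‖A_t v‖ commutes with b(v) = Bv for a fixed orthogonal matrix B with no eigenvalue 1. Then for each t there is ε_t ∈ {+1, -1} with B A_t = ε_t A_t B after rescaling A_t to determinant ±1; in particular it follows that (up to sign) A_t commutes with B. -/

import Mathlib

open Matrix

noncomputable def sphMap {ι : Type*} [Fintype ι] [DecidableEq ι]
    (A : Matrix ι ι ℝ) (v : EuclideanSpace ℝ ι) : EuclideanSpace ℝ ι :=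
  ‖Matrix.toEuclideanLin A v‖⁻¹ • Matrix.toEuclideanLin A v

def Bmat (n : ℕ) : Matrix (Fin 2 ⊕ Fin (n - 1)) (Fin 2 ⊕ Fin (n - 1)) ℝ :=
  Matrix.fromBlocks !![0, 1; -1, 0] 0 0 (-1)
/-- A matrix for which every nonzero vector is an eigenvector with positive
eigenvalue and whose determinant is 1 is the identity. -/
lemma scalar_of_eigen {m : ℕ} (P : Matrix (Fin (m + 1)) (Fin (m + 1)) ℝ)
    (h : ∀ w : Fin (m + 1) → ℝ, w ≠ 0 → ∃ c : ℝ, 0 < c ∧ P *ᵥ w = c • w)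
    (hdet : P.det = 1) : P = 1 := by
  -- eigenvalues on basis vectors
  have hsingle : ∀ i : Fin (m + 1), (Pi.single i 1 : Fin (m + 1) → ℝ) ≠ 0 := by
    intro i hi
    have := congrFun hi i
    simp at this
  choose c hc hPc using fun i => h (Pi.single i 1) (hsingle i)
  -- P is diagonal with entries c
  have hdiag : ∀ i j, P i j = if i = j then c j else 0 := by
    intro i j
    have h1 : (P *ᵥ Pi.single j 1) i = (c j • (Pi.single j 1 : Fin (m+1) → ℝ)) i := by
      rw [hPc]
    simpa [Pi.single_apply, eq_comm, mul_comm] using h1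
  -- all eigenvalues are equal
  have hceq : ∀ i j, c i = c j := by
    intro i j
    rcases eq_or_ne i j with rfl | hij
    · rfl
    have hne : (Pi.single i 1 + Pi.single j 1 : Fin (m+1) → ℝ) ≠ 0 := by
      intro h0
      have := congrFun h0 i
      simp [Pi.single_apply, hij] at this
    obtain ⟨d, hd, hPd⟩ := h _ hne
    have hi := congrFun hPd i
    have hj := congrFun hPd j
    have hPi : (P *ᵥ (Pi.single i 1 + Pi.single j 1)) = (c i • (Pi.single i 1 : Fin (m+1) → ℝ)) + (c j • (Pi.single j 1 : Fin (m+1) → ℝ)) := by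
      rw [Matrix.mulVec_add, hPc, hPc]
    have hi' := congrFun hPi i
    have hj' := congrFun hPi j
    simp [Pi.single_apply, hij, hij.symm] at hi hj hi' hj'
    rw [hi'] at hi
    rw [hj'] at hj
    rw [hi, hj]
  -- hence P = c 0 • 1
  have hP : P = Matrix.diagonal (fun _ => c 0) := by
    ext i j
    rw [hdiag]
    rcases eq_or_ne i j with rfl | hij
    · simp [Matrix.diagonal, hceq i 0]
    · simp [Matrix.diagonal, hij]
  have hdet' : (c 0) ^ (m + 1) = 1 := by
    have := hdet
    rw [hP, Matrix.det_diagonal] at this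
    simpa using this
  have hc0 : c 0 = 1 := by
    rcases lt_trichotomy (c 0) 1 with h1 | h1 | h1
    · have := pow_lt_one₀ (hc 0).le h1 (by omega : m + 1 ≠ 0)
      linarith
    · exact h1
    · have := one_lt_pow₀ h1 (by omega : m + 1 ≠ 0)
      linarith
  rw [hP, hc0]
  simp [Matrix.diagonal_one]


lemma toEuclideanLin_comp {m : ℕ} (M N : Matrix (Fin m) (Fin m) ℝ)
    (z : EuclideanSpace ℝ (Fin m)) :
    Matrix.toEuclideanLin M (Matrix.toEuclideanLin N z) =
      Matrix.toEuclideanLin (M * N) z := by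
  simp [Matrix.toEuclideanLin_apply, Matrix.mulVec_mulVec]

lemma toEuclideanLin_ne_zero {m : ℕ} (X : Matrix (Fin m) (Fin m) ℝ)
    (hX : IsUnit X.det) (z : EuclideanSpace ℝ (Fin m)) (hz : z ≠ 0) :
    Matrix.toEuclideanLin X z ≠ 0 := by
  intro h0
  apply hz
  have h1 : X *ᵥ (WithLp.equiv 2 _ z) = 0 := by
    have := congrArg (WithLp.equiv 2 (Fin m → ℝ)) h0
    simpa using this
  have h2 : (WithLp.equiv 2 (Fin m → ℝ)) z = 0 := by
    have := congrArg (fun y => X⁻¹ *ᵥ y) h1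
    simpa [Matrix.mulVec_mulVec, Matrix.nonsing_inv_mul X hX, Matrix.one_mulVec]
      using this
  have := congrArg (WithLp.equiv 2 (Fin m → ℝ)).symm h2
  simpa using this

/-- If a one-parameter group of matrices of determinant ±1 induces spherical
maps commuting with b(v) = Bv (B orthogonal, no eigenvalue 1), then each A t
commutes with B up to sign. -/
theorem stmt17 (n : ℕ) (A : ℝ → Matrix (Fin (n + 1)) (Fin (n + 1)) ℝ)
    (B : Matrix (Fin (n + 1)) (Fin (n + 1)) ℝ)
    (hhom : ∀ s t : ℝ, A (s + t) = A s * A t) (hA0 : A 0 = 1) (hcont : Continuous A)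
    (hinv : ∀ t, IsUnit (A t).det)
    (hdet : ∀ t, (A t).det = 1 ∨ (A t).det = -1)
    (hBorth : Bᵀ * B = 1)
    (hBeig : ∀ v : Fin (n + 1) → ℝ, v ≠ 0 → B.mulVec v ≠ v)
    (hcomm : ∀ t : ℝ, ∀ v : EuclideanSpace ℝ (Fin (n + 1)), ‖v‖ = 1 →
      sphMap (A t) (Matrix.toEuclideanLin B v) =
        Matrix.toEuclideanLin B (sphMap (A t) v)) :
    ∀ t : ℝ, ∃ ε : ℝ, (ε = 1 ∨ ε = -1) ∧ B * A t = ε • (A t * B) := by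
  intro t
  refine ⟨1, Or.inl rfl, ?_⟩
  rw [one_smul]
  set M := A t with hM
  have hdetM : IsUnit M.det := hinv t
  have hdetB : IsUnit B.det := by
    have h2 : B.det * B.det = 1 := by
      have := congrArg Matrix.det hBorth
      rwa [Matrix.det_mul, Matrix.det_transpose, Matrix.det_one] at this
    exact IsUnit.of_mul_eq_one _ h2
  have hdetBM : IsUnit (B * M).det := by rw [Matrix.det_mul]; exact hdetB.mul hdetM
  have hdetMB : IsUnit (M * B).det := by rw [Matrix.det_mul]; exact hdetM.mul hdetB
  have step : ∀ v : EuclideanSpace ℝ (Fin (n + 1)), ‖v‖ = 1 →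
      ∃ c : ℝ, 0 < c ∧ Matrix.toEuclideanLin (M * B) v
        = c • Matrix.toEuclideanLin (B * M) v := by
    intro v hv1
    have hv0 : v ≠ 0 := by
      intro h0
      rw [h0, norm_zero] at hv1
      exact one_ne_zero hv1.symm
    have hcm := hcomm t v hv1
    unfold sphMap at hcm
    rw [toEuclideanLin_comp, _root_.map_smul, toEuclideanLin_comp, ← hM] at hcm
    set x := Matrix.toEuclideanLin (M * B) v with hx
    set y := Matrix.toEuclideanLin M v with hy
    have hxne : x ≠ 0 := toEuclideanLin_ne_zero _ hdetMB v hv0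
    have hyne : y ≠ 0 := toEuclideanLin_ne_zero _ hdetM v hv0
    have hnx : (0 : ℝ) < ‖x‖ := norm_pos_iff.mpr hxne
    have hny : (0 : ℝ) < ‖y‖ := norm_pos_iff.mpr hyne
    refine ⟨‖x‖ * ‖y‖⁻¹, by positivity, ?_⟩
    have := congrArg (fun z => ‖x‖ • z) hcm
    simpa [smul_smul, mul_inv_cancel₀ hnx.ne'] using this
  have key : ∀ w : Fin (n + 1) → ℝ, w ≠ 0 →
      ∃ c : ℝ, 0 < c ∧ (M * B) *ᵥ w = c • ((B * M) *ᵥ w) := by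
    intro w hw
    set u : EuclideanSpace ℝ (Fin (n + 1)) := (WithLp.equiv 2 _).symm w with hu
    have hu0 : u ≠ 0 := by
      intro h0
      apply hw
      have := congrArg (WithLp.equiv 2 (Fin (n + 1) → ℝ)) h0
      simpa [hu] using this
    have hnu : ‖u‖ ≠ 0 := norm_ne_zero_iff.mpr hu0
    have hv1 : ‖(‖u‖⁻¹ • u : EuclideanSpace ℝ (Fin (n + 1)))‖ = 1 := by
      rw [norm_smul, norm_inv, norm_norm, inv_mul_cancel₀ hnu]
    obtain ⟨c, hc, heq⟩ := step (‖u‖⁻¹ • u) hv1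
    refine ⟨c, hc, ?_⟩
    have hmv := congrArg (WithLp.equiv 2 (Fin (n + 1) → ℝ)) heq
    simp only [WithLp.equiv_apply, Matrix.ofLp_toEuclideanLin_apply, WithLp.ofLp_smul] at hmv
    have hev : WithLp.ofLp u = w := by simp [hu]
    rw [hev, Matrix.mulVec_smul, Matrix.mulVec_smul] at hmv
    have := congrArg (fun z => ‖u‖ • z) hmv
    simp only [smul_smul] at this
    rw [mul_inv_cancel₀ hnu, one_smul] at this
    rw [this]
    congr 1
    field_simp
  -- the matrix (B*M)⁻¹ * (M*B) has every nonzero vector as eigenvector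
  have hP : (B * M)⁻¹ * (M * B) = 1 := by
    apply scalar_of_eigen
    · intro w hw
      obtain ⟨c, hc, heq⟩ := key w hw
      refine ⟨c, hc, ?_⟩
      rw [← Matrix.mulVec_mulVec, heq, Matrix.mulVec_smul, Matrix.mulVec_mulVec,
        Matrix.nonsing_inv_mul _ hdetBM, Matrix.one_mulVec]
    · rw [Matrix.det_mul, Matrix.det_nonsing_inv]
      have hsw : (M * B).det = (B * M).det := by
        rw [Matrix.det_mul, Matrix.det_mul, mul_comm]
      rw [hsw]
      exact Ring.inverse_mul_cancel _ hdetBM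
  have := Matrix.mul_nonsing_inv_cancel_left (B * M) (M * B) hdetBM
  rw [hP, mul_one] at this
  exact this
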